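/- Let n >= 6. If f is a squarefree monomial in S = k[x_1,...,x_n] with NI(C_n)^2 : f = (x_1,...,x_n), then the support of f is a proper subset of {1,...,n}, and the induced subgraph of C_n on the set W = { i ∈ supp(f) : N_{C_n}[i] ⊆ supp(f) } contains a cycle; since an induced subgraph of a cycle graph on a proper vertex subset is a disjoint union of paths, this is a contradiction. Hence (x_1,...,x_n) is not an associated prime of S/NI(C_n)^2 for n >= 6. -/

import Mathlib

open MvPolynomial
open scoped Classical

/-- The closed neighborhood of a vertex `i` of `G`, as a `Finset`. -/
noncomputable def closedNbhd {n : ℕ} (G : SimpleGraph (Fin n)) (i : Fin n) : Finset (Fin n) :=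
  Finset.univ.filter (fun j => j = i ∨ G.Adj i j)

/-- The closed neighborhood ideal of `G` in `k[x_1, …, x_n]`. -/
noncomputable def NI (k : Type*) [Field k] {n : ℕ} (G : SimpleGraph (Fin n)) :
    Ideal (MvPolynomial (Fin n) k) :=
  Ideal.span (Set.range fun i => ∏ j ∈ closedNbhd G i, X j)

/-- The maximal homogeneous ideal `(x_1, …, x_n)`. -/
noncomputable def maxIdeal (k : Type*) [Field k] (n : ℕ) : Ideal (MvPolynomial (Fin n) k) :=
  Ideal.span (Set.range (X : Fin n → MvPolynomial (Fin n) k))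

namespace CycleAux

open Fin.CommRing

variable {N : ℕ}

/-- exponent vector of the neighborhood monomial -/
noncomputable def nb (i : Fin (N + 6)) : Fin (N + 6) →₀ ℕ :=
  Finsupp.single (i - 1) 1 + Finsupp.single i 1 + Finsupp.single (i + 1) 1

-- basic Fin facts
lemma fin_one_ne : (1 : Fin (N + 6)) ≠ 0 := by
  simp [Fin.ext_iff, Fin.val_one']

lemma fin_two_ne : ((1 : Fin (N + 6)) + 1) ≠ 0 := by
  have h : ((1 : Fin (N + 6)) + 1).val = 2 := by
    rw [Fin.val_add]; simp [Fin.val_one']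
  intro h'; rw [h'] at h; simp at h

lemma fin_sub_ne (a : Fin (N + 6)) : a - 1 ≠ a := by
  simpa [sub_eq_self] using (fin_one_ne (N := N))

lemma fin_add_ne (a : Fin (N + 6)) : a + 1 ≠ a := by
  simpa [add_eq_left] using (fin_one_ne (N := N))

lemma fin_sub_ne_add (a : Fin (N + 6)) : a - 1 ≠ a + 1 := by
  intro h
  have h2 : a = a + (1 + 1) := by rw [← add_assoc, ← h]; ring
  exact fin_two_ne (left_eq_add.mp h2)

lemma nb_apply (i v : Fin (N + 6)) :
    nb i v = (if v = i - 1 then 1 else 0) + (if v = i then 1 else 0) +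
      (if v = i + 1 then 1 else 0) := by
  simp [nb, Finsupp.single_apply, eq_comm]

lemma nb_le_one (i v : Fin (N + 6)) : nb i v ≤ 1 := by
  rw [nb_apply]
  split_ifs <;>
    first
      | omega
      | (exfalso;
         first
           | exact fin_sub_ne i (by grind)
           | exact fin_add_ne i (by grind)
           | exact fin_sub_ne_add i (by grind))

lemma nb_self (i : Fin (N + 6)) : nb i i = 1 := by
  rw [nb_apply, if_neg (fun h => fin_sub_ne i h.symm), if_pos rfl,
    if_neg (fun h => fin_add_ne i h.symm)]

lemma nb_left (i : Fin (N + 6)) : nb i (i - 1) = 1 := by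
  rw [nb_apply, if_pos rfl, if_neg (fin_sub_ne i), if_neg (fin_sub_ne_add i)]

lemma nb_right (i : Fin (N + 6)) : nb i (i + 1) = 1 := by
  rw [nb_apply, if_neg (fun h => fin_sub_ne_add i h.symm), if_neg (fin_add_ne i), if_pos rfl]

lemma nb_eq_one_iff {i v : Fin (N + 6)} (h : nb i v ≠ 0) :
    i = v + 1 ∨ i = v ∨ i = v - 1 := by
  rw [nb_apply] at h
  by_cases h1 : v = i - 1
  · left; rw [h1]; ring
  by_cases h2 : v = i
  · right; left; exact h2.symm
  by_cases h3 : v = i + 1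
  · right; right; rw [h3]; ring
  simp [h1, h2, h3] at h



-- val computations for sums of ones
lemma val1 : ((1 : Fin (N + 6))).val = 1 := by simp [Fin.val_one']
lemma val2 : ((1 : Fin (N + 6)) + 1).val = 2 := by
  rw [Fin.val_add, val1]; simp [Fin.val_one']
lemma val3 : ((1 : Fin (N + 6)) + 1 + 1).val = 3 := by
  rw [Fin.val_add, val2, val1]; apply Nat.mod_eq_of_lt; omega
lemma val4 : ((1 : Fin (N + 6)) + 1 + 1 + 1).val = 4 := by
  rw [Fin.val_add, val3, val1]; apply Nat.mod_eq_of_lt; omega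
lemma val5 : ((1 : Fin (N + 6)) + 1 + 1 + 1 + 1).val = 5 := by
  rw [Fin.val_add, val4, val1]; apply Nat.mod_eq_of_lt; omega

lemma ones_ne_zero_1 : (1 : Fin (N + 6)) ≠ 0 := fin_one_ne
lemma ones_ne_zero_2 : ((1 : Fin (N + 6)) + 1) ≠ 0 := by
  intro h; have := congrArg Fin.val h; rw [val2] at this; simp at this
lemma ones_ne_zero_3 : ((1 : Fin (N + 6)) + 1 + 1) ≠ 0 := by
  intro h; have := congrArg Fin.val h; rw [val3] at this; simp at this
lemma ones_ne_zero_4 : ((1 : Fin (N + 6)) + 1 + 1 + 1) ≠ 0 := by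
  intro h; have := congrArg Fin.val h; rw [val4] at this; simp at this
lemma ones_ne_zero_5 : ((1 : Fin (N + 6)) + 1 + 1 + 1 + 1) ≠ 0 := by
  intro h; have := congrArg Fin.val h; rw [val5] at this; simp at this

lemma fin_sub_sub_ne (a : Fin (N + 6)) : a - 1 - 1 ≠ a := by
  intro h
  apply ones_ne_zero_2 (N := N)
  linear_combination -h
lemma fin_add_add_ne (a : Fin (N + 6)) : a + 1 + 1 ≠ a := by
  intro h
  apply ones_ne_zero_2 (N := N)
  linear_combination h

/-- membership version -/
lemma nb_mem {i v : Fin (N + 6)} (h : nb i v ≠ 0) :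
    v = i - 1 ∨ v = i ∨ v = i + 1 := by
  rw [nb_apply] at h
  by_cases h1 : v = i - 1
  · exact Or.inl h1
  by_cases h2 : v = i
  · exact Or.inr (Or.inl h2)
  by_cases h3 : v = i + 1
  · exact Or.inr (Or.inr h3)
  simp [h1, h2, h3] at h

/-- The combinatorial core. -/
lemma comb (d : Fin (N + 6) →₀ ℕ)
    (H : ∀ t : Fin (N + 6), ∃ i j : Fin (N + 6),
      nb i + nb j ≤ d + Finsupp.single t 1) :
    ∃ i j : Fin (N + 6), nb i + nb j ≤ d := by
  by_contra hA
  push_neg at hA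
  have pair_le : ∀ i j t : Fin (N + 6), nb i + nb j ≤ d + Finsupp.single t 1 →
      nb i t + nb j t ≤ d t → False := by
    intro i j t hle hlt
    apply hA i j
    rw [Finsupp.le_def]
    intro v
    by_cases hv : v = t
    · subst hv; simpa [Finsupp.add_apply] using hlt
    · have h2 := Finsupp.le_def.mp hle v
      simpa [Finsupp.add_apply, Finsupp.single_apply, Ne.symm hv] using h2
  have hd1 : ∀ v, d v ≤ 1 := by
    intro v
    obtain ⟨i, j, hij⟩ := H v
    by_contra h
    push_neg at h
    exact pair_le i j v hij
      (by have := nb_le_one i v; have := nb_le_one j v; omega)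
  have window : ∀ t : Fin (N + 6), 1 ≤ d t → ∀ u,
      u = t - 1 - 1 ∨ u = t - 1 ∨ u = t + 1 ∨ u = t + 1 + 1 → 1 ≤ d u := by
    intro t ht u hu
    obtain ⟨i, j, hij⟩ := H t
    have hsum : ¬ (nb i t + nb j t ≤ d t) := fun h => pair_le i j t hij h
    have hle2 : nb i t + nb j t ≤ d t + 1 := by
      have h2 := Finsupp.le_def.mp hij t
      simpa [Finsupp.add_apply, Finsupp.single_apply] using h2
    have hnbi : nb i t = 1 := by
      have := nb_le_one i t; have := nb_le_one j t; omega
    have hnbj : nb j t = 1 := by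
      have := nb_le_one i t; have := nb_le_one j t; omega
    have hoff : ∀ v, v ≠ t → nb i v + nb j v ≤ d v := by
      intro v hv
      have h2 := Finsupp.le_def.mp hij v
      simpa [Finsupp.add_apply, Finsupp.single_apply, Ne.symm hv] using h2
    have contra2 : ∀ v, v ≠ t → nb i v = 1 → nb j v = 1 → False := by
      intro v hv h1 h2
      have := hoff v hv; have := hd1 v; omega
    have hi := nb_eq_one_iff (i := i) (v := t) (by omega)
    have hj := nb_eq_one_iff (i := j) (v := t) (by omega)
    rcases hi with hi | hi | hi <;> rcases hj with hj | hj | hj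
    -- (t+1, t+1)
    · exact absurd (contra2 (t + 1) (fin_add_ne t)
        (by rw [hi]; exact nb_self _) (by rw [hj]; exact nb_self _)) not_false
    -- (t+1, t)
    · exact absurd (contra2 (t + 1) (fin_add_ne t)
        (by rw [hi]; exact nb_self _) (by rw [hj]; exact nb_right _)) not_false
    -- (t+1, t-1) : good case
    · rcases hu with hu | hu | hu | hu <;> subst hu
      · have h1 := hoff (t - 1 - 1) (fin_sub_sub_ne t)
        rw [hi, hj] at h1
        have h2 := nb_left (t - 1)
        omega
      · have h1 := hoff (t - 1) (fin_sub_ne t)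
        rw [hi, hj] at h1
        have h2 := nb_self (t - 1)
        omega
      · have h1 := hoff (t + 1) (fin_add_ne t)
        rw [hi, hj] at h1
        have h2 := nb_self (t + 1)
        omega
      · have h1 := hoff (t + 1 + 1) (fin_add_add_ne t)
        rw [hi, hj] at h1
        have h2 := nb_right (t + 1)
        omega
    -- (t, t+1)
    · exact absurd (contra2 (t + 1) (fin_add_ne t)
        (by rw [hi]; exact nb_right _) (by rw [hj]; exact nb_self _)) not_false
    -- (t, t)
    · exact absurd (contra2 (t + 1) (fin_add_ne t)
        (by rw [hi]; exact nb_right _) (by rw [hj]; exact nb_right _)) not_false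
    -- (t, t-1)
    · exact absurd (contra2 (t - 1) (fin_sub_ne t)
        (by rw [hi]; exact nb_left _) (by rw [hj]; exact nb_self _)) not_false
    -- (t-1, t+1) : good case
    · rcases hu with hu | hu | hu | hu <;> subst hu
      · have h1 := hoff (t - 1 - 1) (fin_sub_sub_ne t)
        rw [hi, hj] at h1
        have h2 := nb_left (t - 1)
        omega
      · have h1 := hoff (t - 1) (fin_sub_ne t)
        rw [hi, hj] at h1
        have h2 := nb_self (t - 1)
        omega
      · have h1 := hoff (t + 1) (fin_add_ne t)
        rw [hi, hj] at h1
        have h2 := nb_self (t + 1)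
        omega
      · have h1 := hoff (t + 1 + 1) (fin_add_add_ne t)
        rw [hi, hj] at h1
        have h2 := nb_right (t + 1)
        omega
    -- (t-1, t)
    · exact absurd (contra2 (t - 1) (fin_sub_ne t)
        (by rw [hi]; exact nb_self _) (by rw [hj]; exact nb_left _)) not_false
    -- (t-1, t-1)
    · exact absurd (contra2 (t - 1) (fin_sub_ne t)
        (by rw [hi]; exact nb_self _) (by rw [hj]; exact nb_self _)) not_false
  have full : ¬ (∀ v, 1 ≤ d v) := by
    intro hall
    apply hA ((0 : Fin (N + 6)) + 1) (0 + 1 + 1 + 1 + 1)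
    rw [Finsupp.le_def]
    intro v
    rw [Finsupp.add_apply]
    have hdv := hall v
    by_cases h0 : nb ((0 : Fin (N + 6)) + 1) v = 0
    · have := nb_le_one (0 + 1 + 1 + 1 + 1 : Fin (N + 6)) v; omega
    by_cases hb : nb (0 + 1 + 1 + 1 + 1 : Fin (N + 6)) v = 0
    · have := nb_le_one ((0 : Fin (N + 6)) + 1) v; omega
    exfalso
    have m1 := nb_mem h0
    have m2 := nb_mem hb
    rcases m1 with h | h | h <;> rcases m2 with g | g | g <;>
      rw [h] at g
    · exact ones_ne_zero_3 (N := N) (by linear_combination -g)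
    · exact ones_ne_zero_4 (N := N) (by linear_combination -g)
    · exact ones_ne_zero_5 (N := N) (by linear_combination -g)
    · exact ones_ne_zero_2 (N := N) (by linear_combination -g)
    · exact ones_ne_zero_3 (N := N) (by linear_combination -g)
    · exact ones_ne_zero_4 (N := N) (by linear_combination -g)
    · exact ones_ne_zero_1 (N := N) (by linear_combination -g)
    · exact ones_ne_zero_2 (N := N) (by linear_combination -g)
    · exact ones_ne_zero_3 (N := N) (by linear_combination -g)
  have hS : ∀ v, d v = 0 := by
    by_contra h
    push_neg at h
    obtain ⟨t, ht⟩ := h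
    have ht1 : 1 ≤ d t := Nat.one_le_iff_ne_zero.mpr ht
    have step : ∀ m : ℕ, 1 ≤ d (t + (m : Fin (N + 6))) := by
      intro m
      induction m with
      | zero => simpa using ht1
      | succ p ih =>
        have hcast : ((p + 1 : ℕ) : Fin (N + 6)) = (p : Fin (N + 6)) + 1 := by
          push_cast; ring
        rw [hcast, ← add_assoc]
        exact window (t + (p : Fin (N + 6))) ih _ (Or.inr (Or.inr (Or.inl rfl)))
    apply full
    intro v
    have h2 := step ((v - t).val)
    rw [Fin.cast_val_eq_self] at h2
    have hv : t + (v - t) = v := by ring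
    rwa [hv] at h2
  obtain ⟨i, j, hij⟩ := H 0
  have e1 := Finsupp.le_def.mp hij i
  have e2 := Finsupp.le_def.mp hij (i + 1)
  rw [Finsupp.add_apply, Finsupp.add_apply, hS i, Finsupp.single_apply] at e1
  rw [Finsupp.add_apply, Finsupp.add_apply, hS (i + 1), Finsupp.single_apply] at e2
  have n1 := nb_self i
  have n2 := nb_right i
  by_cases q1 : (0 : Fin (N + 6)) = i
  · by_cases q2 : (0 : Fin (N + 6)) = i + 1
    · exact fin_add_ne i (q2.symm.trans q1)
    · rw [if_neg q2] at e2; omega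
  · rw [if_neg q1] at e1; omega


section Algebra

variable (k : Type*) [Field k]

lemma fin_val_sub_one_iff (a b : Fin (N + 6)) : (a - b).val = 1 ↔ b = a - 1 := by
  rw [show (1 : ℕ) = ((1 : Fin (N + 6)).val) from (val1 (N := N)).symm, ← Fin.ext_iff]
  constructor
  · intro h; linear_combination -h
  · intro h; subst h; ring

lemma mem_closedNbhd {i j : Fin (N + 6)} :
    j ∈ closedNbhd (SimpleGraph.cycleGraph (N + 6)) i ↔ (j = i - 1 ∨ j = i ∨ j = i + 1) := by
  simp only [closedNbhd, Finset.mem_filter, Finset.mem_univ, true_and,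
    SimpleGraph.cycleGraph_adj']
  rw [fin_val_sub_one_iff, fin_val_sub_one_iff]
  constructor
  · rintro (h | h | h)
    · exact Or.inr (Or.inl h)
    · exact Or.inl h
    · refine Or.inr (Or.inr ?_); rw [h]; ring
  · rintro (h | h | h)
    · exact Or.inr (Or.inl h)
    · exact Or.inl h
    · refine Or.inr (Or.inr ?_); rw [h]; ring

lemma closedNbhd_eq (i : Fin (N + 6)) :
    closedNbhd (SimpleGraph.cycleGraph (N + 6)) i = insert (i - 1) (insert i {i + 1}) := by
  ext j; rw [mem_closedNbhd]; simp

lemma prod_closedNbhd (i : Fin (N + 6)) :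
    ∏ j ∈ closedNbhd (SimpleGraph.cycleGraph (N + 6)) i, (X j : MvPolynomial (Fin (N + 6)) k)
      = monomial (nb i) 1 := by
  rw [closedNbhd_eq,
    Finset.prod_insert (by simp [fin_sub_ne i, fin_sub_ne_add i]),
    Finset.prod_insert (by simp),
    Finset.prod_singleton]
  rw [show (X (i-1) : MvPolynomial (Fin (N+6)) k) = monomial (Finsupp.single (i-1) 1) 1 from rfl,
    show (X i : MvPolynomial (Fin (N+6)) k) = monomial (Finsupp.single i 1) 1 from rfl,
    show (X (i+1) : MvPolynomial (Fin (N+6)) k) = monomial (Finsupp.single (i+1) 1) 1 from rfl]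
  simp [monomial_mul, nb, add_assoc]

/-- the exponent set of `NI^2` -/
def Eset (N : ℕ) : Set (Fin (N + 6) →₀ ℕ) := {s | ∃ i j, s = nb i + nb j}

lemma NI_eq : NI k (SimpleGraph.cycleGraph (N + 6)) =
    Ideal.span ((fun s => monomial s (1 : k)) '' (Set.range nb)) := by
  rw [NI]
  congr 1
  ext p
  constructor
  · rintro ⟨i, rfl⟩
    exact ⟨nb i, ⟨i, rfl⟩, (prod_closedNbhd k i).symm⟩
  · rintro ⟨s, ⟨i, rfl⟩, rfl⟩
    exact ⟨i, prod_closedNbhd k i⟩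

lemma NI_sq_eq : NI k (SimpleGraph.cycleGraph (N + 6)) ^ 2 =
    Ideal.span ((fun s => monomial s (1 : k)) '' (Eset N)) := by
  rw [NI_eq, pow_two, Ideal.span_mul_span]
  congr 1
  ext p
  simp only [Set.mem_iUnion, Set.mem_image, Set.mem_range, Set.mem_singleton_iff, Eset,
    Set.mem_setOf_eq]
  constructor
  · rintro ⟨a, ⟨s, ⟨i, rfl⟩, rfl⟩, b, ⟨s', ⟨j, rfl⟩, rfl⟩, rfl⟩
    exact ⟨nb i + nb j, ⟨i, j, rfl⟩, by simp [monomial_mul]⟩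
  · rintro ⟨s, ⟨i, j, rfl⟩, rfl⟩
    exact ⟨monomial (nb i) 1, ⟨nb i, ⟨i, rfl⟩, rfl⟩, monomial (nb j) 1, ⟨nb j, ⟨j, rfl⟩, rfl⟩,
      by simp [monomial_mul]⟩

lemma mem_sq (f : MvPolynomial (Fin (N + 6)) k) :
    f ∈ NI k (SimpleGraph.cycleGraph (N + 6)) ^ 2 ↔
      ∀ dd ∈ f.support, ∃ i j, nb i + nb j ≤ dd := by
  rw [NI_sq_eq, mem_ideal_span_monomial_image]
  constructor
  · intro h dd hdd
    obtain ⟨si, ⟨i, j, rfl⟩, hle⟩ := h dd hdd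
    exact ⟨i, j, hle⟩
  · intro h dd hdd
    obtain ⟨i, j, hle⟩ := h dd hdd
    exact ⟨nb i + nb j, ⟨i, j, rfl⟩, hle⟩

lemma socle (f : MvPolynomial (Fin (N + 6)) k)
    (h : ∀ t, f * X t ∈ NI k (SimpleGraph.cycleGraph (N + 6)) ^ 2) :
    f ∈ NI k (SimpleGraph.cycleGraph (N + 6)) ^ 2 := by
  rw [mem_sq]
  intro dd hdd
  apply comb
  intro t
  refine (mem_sq k _).mp (h t) (dd + Finsupp.single t 1) ?_
  rw [MvPolynomial.mem_support_iff, coeff_mul_X]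
  exact MvPolynomial.mem_support_iff.mp hdd

end Algebra

end CycleAux

theorem cycle_not_associated_of_six_le {n : ℕ} (hn : 6 ≤ n) {k : Type*} [Field k] :
    (∀ s : Finset (Fin n),
      Submodule.colon (NI k (SimpleGraph.cycleGraph n) ^ 2)
          (Ideal.span {∏ i ∈ s, (X i : MvPolynomial (Fin n) k)}) = maxIdeal k n →
        s ≠ Finset.univ ∧
        ∃ (m : ℕ) (c : ℕ → Fin n), 3 ≤ m ∧
          (∀ i < m, c i ∈ s ∧ closedNbhd (SimpleGraph.cycleGraph n) (c i) ⊆ s) ∧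
          (Function.Injective fun i : Fin m => c i) ∧
          (∀ i < m, (SimpleGraph.cycleGraph n).Adj (c i) (c (i + 1))) ∧ c m = c 0) ∧
    ¬ IsAssociatedPrime (maxIdeal k n)
        (MvPolynomial (Fin n) k ⧸ (NI k (SimpleGraph.cycleGraph n) ^ 2)) := by
  obtain ⟨N, rfl⟩ : ∃ N, N + 6 = n := ⟨n - 6, by omega⟩
  set J : Ideal (MvPolynomial (Fin (N + 6)) k) :=
    NI k (SimpleGraph.cycleGraph (N + 6)) ^ 2 with hJ
  have hproper : maxIdeal k (N + 6) ≠ ⊤ := by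
    intro h
    have h1 : (1 : MvPolynomial (Fin (N + 6)) k) ∈ maxIdeal k (N + 6) := h ▸ Submodule.mem_top
    have h2 : maxIdeal k (N + 6) ≤ RingHom.ker (constantCoeff (σ := Fin (N + 6)) (R := k)) := by
      rw [maxIdeal]
      apply Ideal.span_le.mpr
      rintro p ⟨i, rfl⟩
      simp [RingHom.mem_ker]
    have h3 := h2 h1
    rw [RingHom.mem_ker, map_one] at h3
    exact one_ne_zero h3
  have key : ∀ f : MvPolynomial (Fin (N + 6)) k,
      (∀ t, (X t : MvPolynomial (Fin (N + 6)) k) * f ∈ J) → f ∈ J := by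
    intro f hf
    exact CycleAux.socle k f (fun t => by rw [mul_comm]; exact hf t)
  constructor
  · intro s hs
    exfalso
    have hfmem : (∏ i ∈ s, (X i : MvPolynomial (Fin (N + 6)) k)) ∈ J := by
      apply key
      intro t
      have hX : (X t : MvPolynomial (Fin (N + 6)) k) ∈ maxIdeal k (N + 6) :=
        Ideal.subset_span ⟨t, rfl⟩
      rw [← hs] at hX
      have := Submodule.mem_colon.mp hX _ (Submodule.mem_span_singleton_self _)
      rwa [smul_eq_mul] at this
    have h1 : (1 : MvPolynomial (Fin (N + 6)) k) ∈
        Submodule.colon J (Ideal.span {∏ i ∈ s, (X i : MvPolynomial (Fin (N + 6)) k)}) := by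
      apply Submodule.mem_colon.mpr
      intro p hp
      rw [one_smul]
      exact (Ideal.span_le.mpr (Set.singleton_subset_iff.mpr hfmem)) hp
    rw [hs] at h1
    exact hproper ((Ideal.eq_top_iff_one _).mpr h1)
  · rw [isAssociatedPrime_iff]
    rintro ⟨hp, x, hx⟩
    obtain ⟨g, rfl⟩ := Ideal.Quotient.mk_surjective x
    have hg : ∀ t, (X t : MvPolynomial (Fin (N + 6)) k) * g ∈ J := by
      intro t
      have hX : (X t : MvPolynomial (Fin (N + 6)) k) ∈ maxIdeal k (N + 6) :=
        Ideal.subset_span ⟨t, rfl⟩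
      rw [hx] at hX
      have h0 := (Submodule.mem_bot _).mp (Submodule.mem_colon_singleton.mp hX)
      rw [← Ideal.Quotient.eq_zero_iff_mem (I := J), map_mul]
      rw [← Ideal.Quotient.algebraMap_eq, ← Algebra.smul_def]
      exact h0
    have hgmem := key g hg
    have hx0 : Ideal.Quotient.mk J g = 0 := Ideal.Quotient.eq_zero_iff_mem.mpr hgmem
    rw [hx0] at hx
    exact hproper (hx.trans ((Ideal.eq_top_iff_one _).mpr (by simp [Submodule.mem_colon_singleton])))
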